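/- Let x, x_p : [0,∞) → ℝ^m solve x' = f(x,t) and x_p' = f(x_p,t) + d(x_p,t) respectively, where f satisfies (x−y)·(f(x,t)−f(y,t)) ≤ −λ‖x−y‖² for all x, y, t (one-sided Lipschitz / Euclidean contraction with rate λ > 0), and ‖d(·,·)‖ ≤ D uniformly. Then ‖x(t) − x_p(t)‖ ≤ ‖x(0) − x_p(0)‖·e^{−λt} + D/λ for all t ≥ 0. -/

import Mathlib

open scoped RealInnerProductSpace

theorem contraction_robustness_ode {m : ℕ}
    (f d : EuclideanSpace ℝ (Fin m) → ℝ → EuclideanSpace ℝ (Fin m))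
    (x xp : ℝ → EuclideanSpace ℝ (Fin m)) (lam D : ℝ) (hlam : 0 < lam) (hD : 0 ≤ D)
    (hx : ∀ t, 0 ≤ t → HasDerivAt x (f (x t) t) t)
    (hxp : ∀ t, 0 ≤ t → HasDerivAt xp (f (xp t) t + d (xp t) t) t)
    (hcontr : ∀ a b : EuclideanSpace ℝ (Fin m), ∀ t : ℝ,
      ⟪a - b, f a t - f b t⟫ ≤ -lam * ‖a - b‖ ^ 2)
    (hd : ∀ a t, ‖d a t‖ ≤ D) :
    ∀ t, 0 ≤ t → ‖x t - xp t‖ ≤ ‖x 0 - xp 0‖ * Real.exp (-lam * t) + D / lam := by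
  intro b hb
  classical
  set y : ℝ → EuclideanSpace ℝ (Fin m) := fun t => x t - xp t with hy_def
  set y' : ℝ → EuclideanSpace ℝ (Fin m) :=
    fun t => f (x t) t - (f (xp t) t + d (xp t) t) with hy'_def
  have hy : ∀ t, 0 ≤ t → HasDerivAt y (y' t) t := fun t ht => (hx t ht).sub (hxp t ht)
  set g : ℝ → ℝ := fun t => ‖y t‖ with hg_def
  set g' : ℝ → ℝ := fun t => if y t = 0 then ‖y' t‖ else ⟪y t, y' t⟫ / ‖y t‖ with hg'_def
  have hsqrt : ∀ s, Real.sqrt ⟪y s, y s⟫ = ‖y s‖ := fun s => by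
    rw [real_inner_self_eq_norm_mul_norm, Real.sqrt_mul_self (norm_nonneg _)]
  -- continuity of g on Icc 0 b
  have hgcont : ContinuousOn g (Set.Icc 0 b) := by
    intro t ht
    exact ((hy t ht.1).continuousAt.continuousWithinAt).norm
  -- derivative of g at points where y ≠ 0
  have hgderiv : ∀ t, 0 ≤ t → y t ≠ 0 → HasDerivAt g (g' t) t := by
    intro t ht hne
    have h1 : HasDerivAt (fun s => ⟪y s, y s⟫) (⟪y t, y' t⟫ + ⟪y' t, y t⟫) t :=
      (hy t ht).inner ℝ (hy t ht)
    have h2 : (⟪y t, y t⟫ : ℝ) ≠ 0 := by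
      exact fun h => hne (inner_self_eq_zero.mp h)
    have h3 := (Real.hasDerivAt_sqrt h2).comp t h1
    have h4 : (fun s => Real.sqrt ⟪y s, y s⟫) = g := funext fun s => hsqrt s
    simp only [Function.comp_def] at h3
    rw [h4, hsqrt t] at h3
    refine h3.congr_deriv ?_
    rw [hg'_def]
    simp only [hne, if_false]
    rw [real_inner_comm (y' t) (y t)]
    field_simp
    ring
  -- the liminf slope condition
  have hslope : ∀ t ∈ Set.Ico 0 b, ∀ r, g' t < r →
      ∃ᶠ z in nhdsWithin t (Set.Ioi t), (z - t)⁻¹ * (g z - g t) < r := by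
    intro t ht r hr
    by_cases hne : y t = 0
    · have h1 : ‖y' t‖ < r := by simpa [hg'_def, hne] using hr
      exact (hy t ht.1).hasDerivWithinAt.liminf_right_slope_norm_le h1
    · exact ((hgderiv t ht.1 hne).hasDerivWithinAt.liminf_right_slope_le hr)
  -- the bound g' ≤ -lam * g + D
  have hbound : ∀ t ∈ Set.Ico 0 b, g' t ≤ -lam * g t + D := by
    intro t ht
    by_cases hne : y t = 0
    · have hxt : x t = xp t := by
        have := sub_eq_zero.mp hne
        exact this
      have : y' t = -d (xp t) t := by
        rw [hy'_def]; simp [hxt]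
      rw [hg'_def]
      simp only [hne, if_true, this, norm_neg]
      simpa [hg_def, hne] using hd (xp t) t
    · rw [hg'_def]
      simp only [hne, if_false]
      have hpos : (0:ℝ) < ‖y t‖ := norm_pos_iff.2 hne
      rw [div_le_iff₀ hpos]
      have h1 : ⟪y t, y' t⟫ = ⟪x t - xp t, f (x t) t - f (xp t) t⟫ - ⟪x t - xp t, d (xp t) t⟫ := by
        rw [hy'_def, hy_def]
        simp only
        rw [← inner_sub_right]
        congr 1
        abel
      have h2 : -⟪x t - xp t, d (xp t) t⟫ ≤ ‖y t‖ * D := by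
        calc -⟪x t - xp t, d (xp t) t⟫ ≤ ‖⟪x t - xp t, d (xp t) t⟫‖ := by
              rw [Real.norm_eq_abs]
              exact neg_le_abs _
          _ ≤ ‖x t - xp t‖ * ‖d (xp t) t‖ := norm_inner_le_norm _ _
          _ ≤ ‖y t‖ * D := by
              apply mul_le_mul_of_nonneg_left (hd _ _) (norm_nonneg _)
      calc ⟪y t, y' t⟫ ≤ -lam * ‖y t‖^2 + ‖y t‖ * D := by
            rw [h1]
            have := hcontr (x t) (xp t) t
            linarith [h2, this]
        _ = (-lam * ‖y t‖ + D) * ‖y t‖ := by ring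
  have key := le_gronwallBound_of_liminf_deriv_right_le hgcont hslope (le_refl (g 0)) hbound
  have hb' := key b ⟨hb, le_refl b⟩
  have hKne : (-lam : ℝ) ≠ 0 := by linarith
  rw [gronwallBound_of_K_ne_0 hKne] at hb'
  have hexp : 0 < Real.exp (-lam * (b - 0)) := Real.exp_pos _
  have hexp1 : Real.exp (-lam * (b - 0)) ≤ 1 := by
    apply Real.exp_le_one_iff.2
    nlinarith
  have : D / -lam * (Real.exp (-lam * (b - 0)) - 1) ≤ D / lam := by
    have h1 : D / -lam * (Real.exp (-lam * (b - 0)) - 1) = D / lam * (1 - Real.exp (-lam * (b - 0))) := by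
      field_simp
      ring
    rw [h1]
    have h2 : D / lam ≥ 0 := div_nonneg hD hlam.le
    nlinarith
  have hfinal : g b ≤ g 0 * Real.exp (-lam * b) + D / lam := by
    have : g b ≤ g 0 * Real.exp (-lam * (b - 0)) + D / lam := by linarith
    simpa using this
  simpa [hg_def, hy_def] using hfinal
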